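/- Let n = 2p be an even integer with letter indices taken modulo n, let N ≥ 2, and for a configuration X : Fin N → Fin n let N^k(X) = #{ j : X_j = k }. Suppose X has X_i = k and X_{i+1} = k+p at adjacent sites i, i+1, and let X' be obtained from X by the fold rotation X'_i = k+1, X'_{i+1} = k+p+1, X'_j = X_j elsewhere. Then for every letter l, N^{l+p}(X') − N^l(X') = N^{l+p}(X) − N^l(X); that is, the differences Δ^l = N^{l+p} − N^l between populations of links with opposite directions are conserved by fold rotations. -/

import Mathlib

open Finset
open Fin.NatCast

/-- In the even alphabet model (`n = 2p`, letters mod `n`), the fold rotation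
`(k, k+p) ↦ (k+1, k+p+1)` at adjacent sites conserves, for every letter `l`, the
difference `Δ^l = N^{l+p} − N^l` between the populations of links with opposite
directions. -/
theorem fold_rotation_conserves_delta (p n N : ℕ) (hp : 1 ≤ p) (hn : n = 2 * p)
    [NeZero n] (hN : 2 ≤ N)
    (X X' : Fin N → Fin n) (i : ℕ) (hi : i + 1 < N) (k : Fin n)
    (hXi : X ⟨i, by omega⟩ = k) (hXi1 : X ⟨i + 1, hi⟩ = k + (p : Fin n))
    (hX'i : X' ⟨i, by omega⟩ = k + 1) (hX'i1 : X' ⟨i + 1, hi⟩ = k + (p : Fin n) + 1)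
    (hX'other : ∀ j : Fin N, j ≠ ⟨i, by omega⟩ → j ≠ ⟨i + 1, hi⟩ → X' j = X j) :
    ∀ l : Fin n,
      ((Finset.univ.filter (fun j : Fin N => X' j = l + (p : Fin n))).card : ℤ) -
          ((Finset.univ.filter (fun j : Fin N => X' j = l)).card : ℤ) =
        ((Finset.univ.filter (fun j : Fin N => X j = l + (p : Fin n))).card : ℤ) -
          ((Finset.univ.filter (fun j : Fin N => X j = l)).card : ℤ) := by
  classical
  intro l
  have hpp : (p : Fin n) + (p : Fin n) = 0 := by
    have h1 : ((p + p : ℕ) : Fin n) = ((n : ℕ) : Fin n) := by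
      congr 1; omega
    simpa [Nat.cast_add, Fin.natCast_self] using h1
  have hswap : ∀ a b : Fin n, a + (p : Fin n) = b ↔ a = b + (p : Fin n) := by
    intro a b
    constructor
    · intro h; subst h; rw [add_assoc, hpp, add_zero]
    · intro h; subst h; rw [add_assoc, hpp, add_zero]
  set i0 : Fin N := ⟨i, by omega⟩ with hi0
  set i1 : Fin N := ⟨i + 1, hi⟩ with hi1
  have hne : i0 ≠ i1 := by simp [hi0, hi1, Fin.ext_iff]
  have hcard : ∀ (Y : Fin N → Fin n) (c : Fin n),
      ((Finset.univ.filter (fun j : Fin N => Y j = c)).card : ℤ) =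
        ∑ j : Fin N, (if Y j = c then (1 : ℤ) else 0) := by
    intro Y c
    rw [Finset.card_filter]
    push_cast [apply_ite]
    rfl
  rw [hcard, hcard, hcard, hcard, ← Finset.sum_sub_distrib, ← Finset.sum_sub_distrib]
  have hsum : ∀ h : Fin N → ℤ,
      ∑ j, h j = h i0 + h i1 + ∑ j ∈ (Finset.univ.erase i0).erase i1, h j := by
    intro h
    rw [← Finset.add_sum_erase _ h (Finset.mem_univ i0),
      ← Finset.add_sum_erase _ h (show i1 ∈ Finset.univ.erase i0 by
        simp [Finset.mem_erase, hne.symm])]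
    ring
  rw [hsum, hsum]
  have htail : ∑ j ∈ (Finset.univ.erase i0).erase i1,
        ((if X' j = l + (p : Fin n) then (1 : ℤ) else 0) - if X' j = l then (1 : ℤ) else 0) =
      ∑ j ∈ (Finset.univ.erase i0).erase i1,
        ((if X j = l + (p : Fin n) then (1 : ℤ) else 0) - if X j = l then (1 : ℤ) else 0) := by
    apply Finset.sum_congr rfl
    intro j hj
    simp only [Finset.mem_erase] at hj
    rw [hX'other j hj.2.1 hj.1]
  rw [htail]
  congr 1
  rw [hXi, hXi1, hX'i, hX'i1]
  have e1 : (k + (p : Fin n) + 1 = l + (p : Fin n)) ↔ (k + 1 = l) := by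
    rw [show k + (p : Fin n) + 1 = k + 1 + (p : Fin n) from add_right_comm _ _ _]
    exact add_left_injective _ |>.eq_iff
  have e2 : (k + (p : Fin n) + 1 = l) ↔ (k + 1 = l + (p : Fin n)) := by
    rw [show k + (p : Fin n) + 1 = k + 1 + (p : Fin n) from add_right_comm _ _ _]
    exact hswap _ _
  have e3 : (k + (p : Fin n) = l + (p : Fin n)) ↔ (k = l) :=
    add_left_injective _ |>.eq_iff
  have e4 : (k + (p : Fin n) = l) ↔ (k = l + (p : Fin n)) := hswap _ _
  simp only [e1, e2, e3, e4]
  ring
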